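/- For the block upper triangular matrix M = [[A, B],[0, A]] with A, B ∈ ℝ^{n×n}, the exponential satisfies exp(M) = [[exp(A), L],[0, exp(A)]] where L is the Fréchet derivative of exp at A in the direction B, i.e., L = Σ_{ℓ≥1} (1/ℓ!) Σ_{k=0}^{ℓ-1} A^k B A^{ℓ-1-k}. -/

import Mathlib

open Matrix

private theorem pow_fromBlocks_tri (n : ℕ) (A B : Matrix (Fin n) (Fin n) ℝ) (ℓ : ℕ) :
    (Matrix.fromBlocks A B 0 A) ^ ℓ =
      Matrix.fromBlocks (A ^ ℓ)
        (∑ k ∈ Finset.range ℓ, A ^ k * B * A ^ (ℓ - 1 - k)) 0 (A ^ ℓ) := by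
  induction ℓ with
  | zero => simp [← Matrix.fromBlocks_one]
  | succ ℓ ih =>
    have h12 : A ^ ℓ * B + (∑ k ∈ Finset.range ℓ, A ^ k * B * A ^ (ℓ - 1 - k)) * A =
        ∑ k ∈ Finset.range (ℓ + 1), A ^ k * B * A ^ (ℓ - k) := by
      rw [Finset.sum_range_succ, Nat.sub_self, pow_zero, mul_one, Finset.sum_mul, add_comm]
      congr 1
      refine Finset.sum_congr rfl fun k hk => ?_
      rw [Finset.mem_range] at hk
      rw [mul_assoc (A ^ k * B), ← pow_succ]
      have : ℓ - 1 - k + 1 = ℓ - k := by omega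
      rw [this]
    rw [pow_succ, ih, Matrix.fromBlocks_multiply]
    simp only [Matrix.mul_zero, Matrix.zero_mul, add_zero, zero_add, ← pow_succ, h12,
      Nat.add_sub_cancel]

/-- The exponential of the block matrix `[[A, B], [0, A]]` is
`[[exp A, L], [0, exp A]]` where `L` is the Fréchet derivative of `exp` at `A`
in the direction `B`, given by the series `∑_{ℓ≥1} (1/ℓ!) ∑_{k<ℓ} A^k B A^{ℓ-1-k}`. -/
theorem exp_block_triangular (n : ℕ) (A B : Matrix (Fin n) (Fin n) ℝ) :
    NormedSpace.exp (Matrix.fromBlocks A B 0 A) =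
      Matrix.fromBlocks (NormedSpace.exp A)
        (∑' ℓ : ℕ, ((Nat.factorial (ℓ + 1) : ℝ))⁻¹ •
          ∑ k ∈ Finset.range (ℓ + 1), A ^ k * B * A ^ (ℓ - k))
        0 (NormedSpace.exp A) := by
  letI : SeminormedRing (Matrix (Fin n ⊕ Fin n) (Fin n ⊕ Fin n) ℝ) :=
    Matrix.linftyOpSemiNormedRing
  letI : NormedRing (Matrix (Fin n ⊕ Fin n) (Fin n ⊕ Fin n) ℝ) := Matrix.linftyOpNormedRing
  letI : NormedAlgebra ℝ (Matrix (Fin n ⊕ Fin n) (Fin n ⊕ Fin n) ℝ) :=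
    Matrix.linftyOpNormedAlgebra
  letI : SeminormedRing (Matrix (Fin n) (Fin n) ℝ) := Matrix.linftyOpSemiNormedRing
  letI : NormedRing (Matrix (Fin n) (Fin n) ℝ) := Matrix.linftyOpNormedRing
  letI : NormedAlgebra ℝ (Matrix (Fin n) (Fin n) ℝ) := Matrix.linftyOpNormedAlgebra
  set M := Matrix.fromBlocks A B 0 A with hM
  let L11 : Matrix (Fin n ⊕ Fin n) (Fin n ⊕ Fin n) ℝ →ₗ[ℝ] Matrix (Fin n) (Fin n) ℝ :=
    { toFun := Matrix.toBlocks₁₁, map_add' := fun _ _ => rfl, map_smul' := fun _ _ => rfl }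
  let L12 : Matrix (Fin n ⊕ Fin n) (Fin n ⊕ Fin n) ℝ →ₗ[ℝ] Matrix (Fin n) (Fin n) ℝ :=
    { toFun := Matrix.toBlocks₁₂, map_add' := fun _ _ => rfl, map_smul' := fun _ _ => rfl }
  let L21 : Matrix (Fin n ⊕ Fin n) (Fin n ⊕ Fin n) ℝ →ₗ[ℝ] Matrix (Fin n) (Fin n) ℝ :=
    { toFun := Matrix.toBlocks₂₁, map_add' := fun _ _ => rfl, map_smul' := fun _ _ => rfl }
  let L22 : Matrix (Fin n ⊕ Fin n) (Fin n ⊕ Fin n) ℝ →ₗ[ℝ] Matrix (Fin n) (Fin n) ℝ :=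
    { toFun := Matrix.toBlocks₂₂, map_add' := fun _ _ => rfl, map_smul' := fun _ _ => rfl }
  have hsum : Summable fun ℓ : ℕ => ((Nat.factorial ℓ : ℝ))⁻¹ • M ^ ℓ :=
    NormedSpace.expSeries_summable' (𝕂 := ℝ) M
  have hEM : NormedSpace.exp M = ∑' ℓ : ℕ, ((Nat.factorial ℓ : ℝ))⁻¹ • M ^ ℓ := by
    rw [NormedSpace.exp_eq_tsum (𝕂 := ℝ)]
  have hEA : NormedSpace.exp A = ∑' ℓ : ℕ, ((Nat.factorial ℓ : ℝ))⁻¹ • A ^ ℓ := by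
    rw [NormedSpace.exp_eq_tsum (𝕂 := ℝ)]
  have hmap : ∀ (L : Matrix (Fin n ⊕ Fin n) (Fin n ⊕ Fin n) ℝ →ₗ[ℝ] Matrix (Fin n) (Fin n) ℝ),
      L (NormedSpace.exp M) = ∑' ℓ : ℕ, L (((Nat.factorial ℓ : ℝ))⁻¹ • M ^ ℓ) := by
    intro L
    rw [hEM]
    exact L.toContinuousLinearMap.map_tsum hsum
  have hpow := pow_fromBlocks_tri n A B
  have e11 : Matrix.toBlocks₁₁ (NormedSpace.exp M) = NormedSpace.exp A := by
    rw [show Matrix.toBlocks₁₁ (NormedSpace.exp M) = L11 (NormedSpace.exp M) from rfl,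
      hmap L11, hEA]
    refine tsum_congr fun ℓ => ?_
    simp only [LinearMap.map_smul]
    congr 1
    rw [show L11 (M ^ ℓ) = Matrix.toBlocks₁₁ (M ^ ℓ) from rfl, hpow ℓ]
    rfl
  have e22 : Matrix.toBlocks₂₂ (NormedSpace.exp M) = NormedSpace.exp A := by
    rw [show Matrix.toBlocks₂₂ (NormedSpace.exp M) = L22 (NormedSpace.exp M) from rfl,
      hmap L22, hEA]
    refine tsum_congr fun ℓ => ?_
    simp only [LinearMap.map_smul]
    congr 1
    rw [show L22 (M ^ ℓ) = Matrix.toBlocks₂₂ (M ^ ℓ) from rfl, hpow ℓ]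
    rfl
  have e21 : Matrix.toBlocks₂₁ (NormedSpace.exp M) = 0 := by
    rw [show Matrix.toBlocks₂₁ (NormedSpace.exp M) = L21 (NormedSpace.exp M) from rfl,
      hmap L21]
    have hterm : ∀ ℓ : ℕ, L21 (((Nat.factorial ℓ : ℝ))⁻¹ • M ^ ℓ) = 0 := by
      intro ℓ
      rw [LinearMap.map_smul]
      rw [show L21 (M ^ ℓ) = Matrix.toBlocks₂₁ (M ^ ℓ) from rfl, hpow ℓ]
      simp
    simp [hterm]
  have e12 : Matrix.toBlocks₁₂ (NormedSpace.exp M) =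
      ∑' ℓ : ℕ, ((Nat.factorial (ℓ + 1) : ℝ))⁻¹ •
        ∑ k ∈ Finset.range (ℓ + 1), A ^ k * B * A ^ (ℓ - k) := by
    rw [show Matrix.toBlocks₁₂ (NormedSpace.exp M) = L12 (NormedSpace.exp M) from rfl,
      hmap L12]
    have hterm : ∀ ℓ : ℕ, L12 (((Nat.factorial ℓ : ℝ))⁻¹ • M ^ ℓ) =
        ((Nat.factorial ℓ : ℝ))⁻¹ • ∑ k ∈ Finset.range ℓ, A ^ k * B * A ^ (ℓ - 1 - k) := by
      intro ℓ
      rw [LinearMap.map_smul]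
      congr 1
      rw [show L12 (M ^ ℓ) = Matrix.toBlocks₁₂ (M ^ ℓ) from rfl, hpow ℓ]
      rfl
    have hsum12 : Summable fun ℓ : ℕ => L12 (((Nat.factorial ℓ : ℝ))⁻¹ • M ^ ℓ) :=
      hsum.map L12.toContinuousLinearMap.toLinearMap.toAddMonoidHom
        L12.toContinuousLinearMap.continuous
    rw [Summable.tsum_eq_zero_add hsum12]
    have h0 : L12 (((Nat.factorial 0 : ℝ))⁻¹ • M ^ 0) = 0 := by
      rw [hterm 0]; simp
    rw [h0, zero_add]
    refine tsum_congr fun ℓ => ?_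
    rw [hterm (ℓ + 1)]
    simp
  rw [← Matrix.fromBlocks_toBlocks (NormedSpace.exp M), e11, e12, e21, e22]
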